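/- Let λ ≥ 1, let ι be an index type, and let (X_i)_{i∈ι} be a family of real Banach spaces each of which is an absolute λ-Lipschitz retract: for every metric space Z and every isometric embedding j : X_i → Z there exists a λ-Lipschitz map r : Z → X_i with r(j(x)) = x for all x ∈ X_i. Then the c₀-sum of the family — the closed subspace Y of the ℓ∞-sum lp X ∞ consisting of those x with ‖x_i‖ → 0 along the cofinite filter on ι (equivalently, {i : ‖x_i‖ ≥ ε} is finite for every ε > 0), with the supremum norm — is an absolute 2λ-Lipschitz retract. -/
import Mathlib


open Cardinal

/-- A metric space `X` is an absolute `λ`-Lipschitz retract if for every metric space `Z`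
and every isometric embedding `j : X → Z` there is a `λ`-Lipschitz map `r : Z → X` with
`r ∘ j = id`. -/
def IsAbsoluteLipschitzRetract.{z, x} (lam : NNReal) (X : Type x) [MetricSpace X] : Prop :=
  ∀ (Z : Type z) [MetricSpace Z] (j : X → Z), Isometry j →
    ∃ r : Z → X, LipschitzWith lam r ∧ ∀ x : X, r (j x) = x

/-- The `c₀`-sum of a family of Banach spaces, viewed as the subset of its `ℓ∞`-sum
consisting of the families whose norms tend to `0` along the cofinite filter. -/
def c0Sum {ι : Type u} (X : ι → Type v) [∀ i, NormedAddCommGroup (X i)] :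
    Set (lp X ⊤) :=
  {x : lp X ⊤ | Filter.Tendsto (fun i => ‖(x : ∀ i, X i) i‖) Filter.cofinite (nhds 0)}


noncomputable def myTrunc {E : Type*} [NormedAddCommGroup E] [NormedSpace ℝ E] (t : ℝ) (v : E) :
    E := max 0 (1 - t / ‖v‖) • v

section Trunc
variable {E : Type*} [NormedAddCommGroup E] [NormedSpace ℝ E]

lemma myTrunc_zero (v : E) : myTrunc 0 v = v := by
  simp [myTrunc]

lemma myTrunc_eq_zero {t : ℝ} {v : E} (hv : ‖v‖ ≤ t) : myTrunc t v = 0 := by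
  rcases eq_or_ne v 0 with rfl | hv0
  · simp [myTrunc]
  · have hR : 0 < ‖v‖ := norm_pos_iff.mpr hv0
    have : 1 - t / ‖v‖ ≤ 0 := by
      have : 1 ≤ t / ‖v‖ := (one_le_div hR).mpr hv
      linarith
    simp [myTrunc, max_eq_left this]

lemma norm_myTrunc {t : ℝ} (ht : 0 ≤ t) (v : E) : ‖myTrunc t v‖ = max 0 (‖v‖ - t) := by
  rcases eq_or_ne v 0 with rfl | hv0
  · simp [myTrunc]; linarith
  · have hR : 0 < ‖v‖ := norm_pos_iff.mpr hv0
    rw [myTrunc, norm_smul, Real.norm_eq_abs, abs_of_nonneg (le_max_left _ _),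
      max_mul_of_nonneg _ _ hR.le, zero_mul, sub_mul, one_mul, div_mul_cancel₀ _ hR.ne']

lemma norm_myTrunc_le {t : ℝ} (ht : 0 ≤ t) (v : E) : ‖myTrunc t v‖ ≤ ‖v‖ := by
  rw [norm_myTrunc ht]
  rcases le_total (‖v‖ - t) 0 with h | h
  · rw [max_eq_left h]; exact norm_nonneg v
  · rw [max_eq_right h]; linarith

lemma norm_myTrunc_sub_same {t : ℝ} (ht : 0 ≤ t) (v w : E) :
    ‖myTrunc t v - myTrunc t w‖ ≤ ‖v - w‖ := by
  wlog hvw : ‖w‖ ≤ ‖v‖ generalizing v w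
  · rw [norm_sub_rev, norm_sub_rev v w]; exact this w v (le_of_not_ge hvw)
  rcases le_or_gt ‖v‖ t with hR | hR
  · rw [myTrunc_eq_zero hR, myTrunc_eq_zero (hvw.trans hR), sub_zero, norm_zero]
    exact norm_nonneg _
  · have hRpos : 0 < ‖v‖ := lt_of_le_of_lt ht hR
    rcases le_or_gt ‖w‖ t with hr | hr
    · rw [myTrunc_eq_zero hr, sub_zero, norm_myTrunc ht,
        max_eq_right (by linarith : (0:ℝ) ≤ ‖v‖ - t)]
      have h1 : ‖v‖ - ‖w‖ ≤ ‖v - w‖ := norm_sub_norm_le v w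
      linarith
    · have hrpos : 0 < ‖w‖ := lt_of_le_of_lt ht hr
      set a : ℝ := 1 - t / ‖v‖ with ha
      set b : ℝ := 1 - t / ‖w‖ with hb
      clear_value a b
      have hapos : 0 < a := by
        have : t / ‖v‖ < 1 := (div_lt_one hRpos).mpr hR
        simp only [ha]; linarith
      have hbpos : 0 < b := by
        have : t / ‖w‖ < 1 := (div_lt_one hrpos).mpr hr
        simp only [hb]; linarith
      have hba : b ≤ a := by
        have : t / ‖v‖ ≤ t / ‖w‖ := div_le_div_of_nonneg_left ht hrpos hvw
        simp only [ha, hb]; linarith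
      have hkey : myTrunc t v - myTrunc t w = a • (v - w) + (a - b) • w := by
        rw [myTrunc, myTrunc, ← ha, ← hb, max_eq_right hapos.le, max_eq_right hbpos.le,
          smul_sub, sub_smul]
        module
      rw [hkey]
      have h1 : ‖a • (v - w) + (a - b) • w‖ ≤ a * ‖v - w‖ + (a - b) * ‖w‖ := by
        refine (norm_add_le _ _).trans ?_
        rw [norm_smul, norm_smul, Real.norm_eq_abs, Real.norm_eq_abs,
          abs_of_nonneg hapos.le, abs_of_nonneg (by linarith : (0:ℝ) ≤ a - b)]
      refine h1.trans ?_
      have h2 : (a - b) * ‖w‖ = t * (‖v‖ - ‖w‖) / ‖v‖ := by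
        simp only [ha, hb]
        field_simp
        ring
      have h3 : ‖v‖ - ‖w‖ ≤ ‖v - w‖ := norm_sub_norm_le v w
      have h4 : t * (‖v‖ - ‖w‖) / ‖v‖ ≤ t / ‖v‖ * ‖v - w‖ :=
        calc t * (‖v‖ - ‖w‖) / ‖v‖ ≤ t * ‖v - w‖ / ‖v‖ := by gcongr
          _ = t / ‖v‖ * ‖v - w‖ := by ring
      have h5 : a * ‖v - w‖ = ‖v - w‖ - t / ‖v‖ * ‖v - w‖ := by simp only [ha]; ring
      linarith

lemma norm_myTrunc_sub_myTrunc_same (t s : ℝ) (v : E) :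
    ‖myTrunc t v - myTrunc s v‖ ≤ |t - s| := by
  rcases eq_or_ne v 0 with rfl | hv0
  · simp [myTrunc, abs_nonneg]
  · have hR : 0 < ‖v‖ := norm_pos_iff.mpr hv0
    have hkey : myTrunc t v - myTrunc s v
        = (max 0 (1 - t / ‖v‖) - max 0 (1 - s / ‖v‖)) • v := by
      rw [myTrunc, myTrunc, sub_smul]
    rw [hkey, norm_smul, Real.norm_eq_abs]
    have h1 : |max 0 (1 - t / ‖v‖) - max 0 (1 - s / ‖v‖)|
        ≤ |(1 - t / ‖v‖) - (1 - s / ‖v‖)| := by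
      have := abs_max_sub_max_le_abs (1 - t / ‖v‖) (1 - s / ‖v‖) 0
      rwa [max_comm (1 - t / ‖v‖) 0, max_comm (1 - s / ‖v‖) 0] at this
    have h2 : |(1 - t / ‖v‖) - (1 - s / ‖v‖)| = |t - s| / ‖v‖ := by
      rw [show (1 - t / ‖v‖) - (1 - s / ‖v‖) = (s - t) / ‖v‖ by ring,
        abs_div, abs_of_pos hR, abs_sub_comm]
    calc |max 0 (1 - t / ‖v‖) - max 0 (1 - s / ‖v‖)| * ‖v‖
        ≤ |t - s| / ‖v‖ * ‖v‖ := by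
          refine mul_le_mul_of_nonneg_right ?_ hR.le
          rw [← h2]; exact h1
      _ = |t - s| := div_mul_cancel₀ _ hR.ne'

lemma norm_myTrunc_sub_myTrunc {t s : ℝ} (ht : 0 ≤ t) (v w : E) :
    ‖myTrunc t v - myTrunc s w‖ ≤ ‖v - w‖ + |t - s| := by
  calc ‖myTrunc t v - myTrunc s w‖
      ≤ ‖myTrunc t v - myTrunc t w‖ + ‖myTrunc t w - myTrunc s w‖ :=
        norm_sub_le_norm_sub_add_norm_sub _ _ _
    _ ≤ ‖v - w‖ + |t - s| :=
        add_le_add (norm_myTrunc_sub_same ht v w) (norm_myTrunc_sub_myTrunc_same t s w)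

end Trunc


private lemma my_le_add_ciInf {α : Sort*} [Nonempty α] {f : α → ℝ} {x C : ℝ}
    (h : ∀ a, x ≤ C + f a) : x ≤ C + ⨅ a, f a := by
  rw [← sub_le_iff_le_add']
  exact le_ciInf fun a => by have := h a; linarith

private lemma my_ciInf_le {α : Sort*} [Nonempty α] {f : α → ℝ} (h0 : ∀ a, 0 ≤ f a) (a : α) :
    ⨅ b, f b ≤ f a :=
  ciInf_le ⟨0, by rintro x ⟨b, rfl⟩; exact h0 b⟩ a

structure GlueCarrier (Z : Type z') (S : Set Z) : Type z' where
  toSum : Z ⊕ S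

section GlueDef

variable {A : Type u'} {Z : Type z'} {K : Type v'}
  [MetricSpace A] [MetricSpace Z] [MetricSpace K] [Nonempty A]

private noncomputable def glueE (j : A → Z) (ψ : K → Z) (p : A → K) (z w : Z) : ℝ :=
  ⨅ a : A, (dist z (j a) + dist (ψ (p a)) w)

private noncomputable def glueM (j : A → Z) (ψ : K → Z) (p : A → K) (z z' : Z) : ℝ :=
  ⨅ q : A × A, (dist z (j q.1) + dist (ψ (p q.1)) (ψ (p q.2)) + dist (j q.2) z')

variable (j : A → Z) (ψ : K → Z) (p : A → K)

private lemma glueE0 (z w : Z) (a : A) : 0 ≤ dist z (j a) + dist (ψ (p a)) w := by positivity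

private lemma glueM0 (z z' : Z) (q : A × A) :
    0 ≤ dist z (j q.1) + dist (ψ (p q.1)) (ψ (p q.2)) + dist (j q.2) z' := by positivity

private lemma glueE_nonneg (z w : Z) : 0 ≤ glueE j ψ p z w := le_ciInf (glueE0 j ψ p z w)

private lemma glueM_nonneg (z z' : Z) : 0 ≤ glueM j ψ p z z' := le_ciInf (glueM0 j ψ p z z')

private lemma glueE_le (z w : Z) (a : A) :
    glueE j ψ p z w ≤ dist z (j a) + dist (ψ (p a)) w :=
  my_ciInf_le (glueE0 j ψ p z w) a

private lemma glueM_le (z z' : Z) (a b : A) :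
    glueM j ψ p z z' ≤ dist z (j a) + dist (ψ (p a)) (ψ (p b)) + dist (j b) z' :=
  my_ciInf_le (glueM0 j ψ p z z') (a, b)

variable {j ψ p} (hκ : ∀ a b : A, dist (ψ (p a)) (ψ (p b)) ≤ dist (j a) (j b))

private lemma glue_tE (z : Z) (w w' : Z) :
    glueE j ψ p z w ≤ glueE j ψ p z w' + dist w' w := by
  simp only [glueE]
  rw [add_comm]
  refine my_le_add_ciInf fun a => ?_
  have h1 := glueE_le j ψ p z w a
  simp only [glueE] at h1
  have h2 := dist_triangle (ψ (p a)) w' w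
  linarith

private lemma glue_tF (z z'' z' : Z) : glueM j ψ p z z' ≤ dist z z'' + glueM j ψ p z'' z' := by
  simp only [glueM]
  refine my_le_add_ciInf fun q => ?_
  have h1 := glueM_le j ψ p z z' q.1 q.2
  simp only [glueM] at h1
  have h2 := dist_triangle z z'' (j q.1)
  linarith

private lemma glue_tG (z z'' z' : Z) : glueM j ψ p z z' ≤ glueM j ψ p z z'' + dist z'' z' := by
  simp only [glueM]
  rw [add_comm]
  refine my_le_add_ciInf fun q => ?_
  have h1 := glueM_le j ψ p z z' q.1 q.2
  simp only [glueM] at h1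
  have h2 := dist_triangle (j q.2) z'' z'
  linarith

private lemma glue_tI (z z' : Z) : glueM j ψ p z z' = glueM j ψ p z' z := by
  have key : ∀ y y' : Z, glueM j ψ p y' y ≤ glueM j ψ p y y' := by
    intro y y'
    simp only [glueM]
    refine le_ciInf fun q => ?_
    have h1 := glueM_le j ψ p y' y q.2 q.1
    simp only [glueM] at h1
    have c1 := dist_comm (ψ (p q.2)) (ψ (p q.1))
    have c2 := dist_comm y' (j q.2)
    have c3 := dist_comm (j q.1) y
    linarith
  exact le_antisymm (key z' z) (key z z')

section Tri
include hκ

private lemma glue_tA (z z' w : Z) : glueE j ψ p z w ≤ dist z z' + glueE j ψ p z' w := by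
  simp only [glueE]
  refine my_le_add_ciInf fun a => ?_
  have h1 := glueE_le j ψ p z w a
  simp only [glueE] at h1
  have h2 := dist_triangle z z' (j a)
  linarith

private lemma glue_tB (z z' w : Z) :
    glueE j ψ p z w ≤ glueM j ψ p z z' + glueE j ψ p z' w := by
  simp only [glueE, glueM]
  refine my_le_add_ciInf fun c => ?_
  rw [add_comm]
  refine my_le_add_ciInf fun q => ?_
  have h1 := glueE_le j ψ p z w q.1
  simp only [glueE] at h1
  have h2 := dist_triangle (ψ (p q.1)) (ψ (p q.2)) w
  have h3 := dist_triangle (ψ (p q.2)) (ψ (p c)) w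
  have h4 := hκ q.2 c
  have h5 := dist_triangle (j q.2) z' (j c)
  linarith

private lemma glue_tC (z z' w : Z) :
    glueM j ψ p z z' ≤ glueE j ψ p z w + glueE j ψ p z' w := by
  simp only [glueE, glueM]
  refine my_le_add_ciInf fun b => ?_
  rw [add_comm]
  refine my_le_add_ciInf fun a => ?_
  have h1 := glueM_le j ψ p z z' a b
  simp only [glueM] at h1
  have h2 := dist_triangle (ψ (p a)) w (ψ (p b))
  have h3 := dist_comm w (ψ (p b))
  have h4 := dist_comm (j b) z'
  linarith

private lemma glue_tD (z w w' : Z) : dist w w' ≤ glueE j ψ p z w + glueE j ψ p z w' := by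
  simp only [glueE]
  refine my_le_add_ciInf fun b => ?_
  rw [add_comm]
  refine my_le_add_ciInf fun a => ?_
  have t1 := dist_triangle w (ψ (p a)) w'
  have t2 := dist_triangle (ψ (p a)) (ψ (p b)) w'
  have t3 := hκ a b
  have t4 := dist_triangle (j a) z (j b)
  have c1 := dist_comm w (ψ (p a))
  have c2 := dist_comm (j a) z
  linarith

private lemma glue_tH (z z'' z' : Z) :
    glueM j ψ p z z' ≤ glueM j ψ p z z'' + glueM j ψ p z'' z' := by
  simp only [glueM]
  refine my_le_add_ciInf fun q' => ?_
  rw [add_comm]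
  refine my_le_add_ciInf fun q => ?_
  have h1 := glueM_le j ψ p z z' q.1 q'.2
  simp only [glueM] at h1
  have h2 := dist_triangle (ψ (p q.1)) (ψ (p q.2)) (ψ (p q'.2))
  have h3 := dist_triangle (ψ (p q.2)) (ψ (p q'.1)) (ψ (p q'.2))
  have h4 := hκ q.2 q'.1
  have h5 := dist_triangle (j q.2) z'' (j q'.1)
  linarith

end Tri

variable (j ψ p) in
private noncomputable def glueDist :
    GlueCarrier Z (Set.range ψ) → GlueCarrier Z (Set.range ψ) → ℝ := fun x y =>
  match x, y with
  | ⟨Sum.inl z⟩, ⟨Sum.inl z'⟩ => min (dist z z') (glueM j ψ p z z')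
  | ⟨Sum.inl z⟩, ⟨Sum.inr s⟩ => glueE j ψ p z s
  | ⟨Sum.inr s⟩, ⟨Sum.inl z⟩ => glueE j ψ p z s
  | ⟨Sum.inr s⟩, ⟨Sum.inr s'⟩ => dist (s : Z) (s' : Z)

variable (j ψ p) in
private noncomputable def glueMetric
    (hκ : ∀ a b : A, dist (ψ (p a)) (ψ (p b)) ≤ dist (j a) (j b)) :
    PseudoMetricSpace (GlueCarrier Z (Set.range ψ)) where
  dist := glueDist j ψ p
  dist_self := by
    rintro ⟨z | s⟩
    · show min (dist z z) (glueM j ψ p z z) = 0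
      rw [dist_self]
      exact min_eq_left (glueM_nonneg j ψ p z z)
    · exact dist_self (s : Z)
  dist_comm := by
    rintro ⟨z | s⟩ ⟨z' | s'⟩
    · show min (dist z z') (glueM j ψ p z z') = min (dist z' z) (glueM j ψ p z' z)
      rw [dist_comm, glue_tI]
    · rfl
    · rfl
    · exact dist_comm (_ : Z) (_ : Z)
  dist_triangle := by
    rintro ⟨z | s⟩ ⟨z'' | s''⟩ ⟨z' | s'⟩
    · show min (dist z z') (glueM j ψ p z z')
        ≤ min (dist z z'') (glueM j ψ p z z'') + min (dist z'' z') (glueM j ψ p z'' z')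
      rcases min_cases (dist z z'') (glueM j ψ p z z'') with ⟨h1, _⟩ | ⟨h1, _⟩ <;>
        rcases min_cases (dist z'' z') (glueM j ψ p z'' z') with ⟨h2, _⟩ | ⟨h2, _⟩ <;>
        rw [h1, h2]
      · exact (min_le_left _ _).trans (dist_triangle z z'' z')
      · exact (min_le_right _ _).trans (glue_tF z z'' z')
      · exact (min_le_right _ _).trans (glue_tG z z'' z')
      · exact (min_le_right _ _).trans (glue_tH hκ z z'' z')
    · show glueE j ψ p z s' ≤ min (dist z z'') (glueM j ψ p z z'') + glueE j ψ p z'' s'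
      rcases min_cases (dist z z'') (glueM j ψ p z z'') with ⟨h1, _⟩ | ⟨h1, _⟩ <;> rw [h1]
      · exact glue_tA hκ z z'' (s' : Z)
      · exact glue_tB hκ z z'' (s' : Z)
    · show min (dist z z') (glueM j ψ p z z') ≤ glueE j ψ p z s'' + glueE j ψ p z' s''
      exact (min_le_right _ _).trans (glue_tC hκ z z' (s'' : Z))
    · show glueE j ψ p z s' ≤ glueE j ψ p z s'' + dist (s'' : Z) (s' : Z)
      exact glue_tE z (s' : Z) (s'' : Z)
    · show glueE j ψ p z' s ≤ glueE j ψ p z'' s + min (dist z'' z') (glueM j ψ p z'' z')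
      rcases min_cases (dist z'' z') (glueM j ψ p z'' z') with ⟨h1, _⟩ | ⟨h1, _⟩ <;> rw [h1]
      · have := glue_tA hκ z' z'' (s : Z)
        rw [dist_comm z' z''] at this
        linarith
      · have := glue_tB hκ z' z'' (s : Z)
        rw [glue_tI z' z''] at this
        linarith
    · show dist (s : Z) (s' : Z) ≤ glueE j ψ p z'' s + glueE j ψ p z'' s'
      exact glue_tD hκ z'' (s : Z) (s' : Z)
    · show glueE j ψ p z' s ≤ dist (s : Z) (s'' : Z) + glueE j ψ p z' s''
      have h1 := glue_tE (j := j) (ψ := ψ) (p := p) z' (s : Z) (s'' : Z)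
      have c := dist_comm (s : Z) (s'' : Z)
      linarith
    · exact dist_triangle (s : Z) (s'' : Z) (s' : Z)

lemma glue_extension
    (lam : NNReal) (j : A → Z) (hj : Isometry j) (ψ : K → Z) (hψ : Isometry ψ)
    (p : A → K) (hp : ∀ a b, dist (p a) (p b) ≤ dist a b)
    (hK : ∀ (W : Type z') [MetricSpace W] (k : K → W), Isometry k →
      ∃ r : W → K, LipschitzWith lam r ∧ ∀ x : K, r (k x) = x) :
    ∃ F : Z → K, (∀ z z', dist (F z) (F z') ≤ lam * dist z z') ∧ ∀ a, F (j a) = p a := by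
  classical
  have hκ : ∀ a b : A, dist (ψ (p a)) (ψ (p b)) ≤ dist (j a) (j b) := fun a b => by
    rw [hψ.dist_eq, hj.dist_eq]; exact hp a b
  letI instW0 : PseudoMetricSpace (GlueCarrier Z (Set.range ψ)) := glueMetric j ψ p hκ
  set k : K → SeparationQuotient (GlueCarrier Z (Set.range ψ)) := fun x =>
    SeparationQuotient.mk ⟨Sum.inr ⟨ψ x, Set.mem_range_self x⟩⟩ with hk
  have hkiso : Isometry k := by
    refine Isometry.of_dist_eq fun x y => ?_
    rw [hk]
    rw [SeparationQuotient.dist_mk]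
    show dist (ψ x) (ψ y) = dist x y
    exact hψ.dist_eq x y
  obtain ⟨r, hr, hrk⟩ := hK (SeparationQuotient (GlueCarrier Z (Set.range ψ))) k hkiso
  refine ⟨fun z => r (SeparationQuotient.mk ⟨Sum.inl z⟩), ?_, ?_⟩
  · intro z z'
    calc dist (r (SeparationQuotient.mk (⟨Sum.inl z⟩ : GlueCarrier Z (Set.range ψ))))
          (r (SeparationQuotient.mk ⟨Sum.inl z'⟩))
        ≤ lam * dist (SeparationQuotient.mk (⟨Sum.inl z⟩ : GlueCarrier Z (Set.range ψ)))
            (SeparationQuotient.mk ⟨Sum.inl z'⟩) := hr.dist_le_mul _ _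
      _ ≤ lam * dist z z' := by
          refine mul_le_mul_of_nonneg_left ?_ lam.2
          rw [SeparationQuotient.dist_mk]
          exact min_le_left _ _
  · intro a
    have h0 : dist (⟨Sum.inl (j a)⟩ : GlueCarrier Z (Set.range ψ))
        ⟨Sum.inr ⟨ψ (p a), Set.mem_range_self (p a)⟩⟩ = 0 := by
      refine le_antisymm ?_ dist_nonneg
      have h1 := glueE_le j ψ p (j a) (ψ (p a)) a
      simp only [dist_self] at h1
      show glueE j ψ p (j a) (ψ (p a)) ≤ 0
      simpa using h1
    have hmkeq : SeparationQuotient.mk (⟨Sum.inl (j a)⟩ : GlueCarrier Z (Set.range ψ))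
        = SeparationQuotient.mk ⟨Sum.inr ⟨ψ (p a), Set.mem_range_self (p a)⟩⟩ :=
      SeparationQuotient.mk_eq_mk.mpr (Metric.inseparable_iff.mpr h0)
    show r (SeparationQuotient.mk (⟨Sum.inl (j a)⟩ : GlueCarrier Z (Set.range ψ))) = p a
    rw [hmkeq]
    exact hrk (p a)

theorem c0_sum_absolute_lipschitz_retract.{z, u, v}
    (lam : NNReal) (hlam : 1 ≤ lam) (ι : Type u)
    (X : ι → Type v) [∀ i, NormedAddCommGroup (X i)] [∀ i, NormedSpace ℝ (X i)]
    [∀ i, CompleteSpace (X i)]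
    (h : ∀ i, IsAbsoluteLipschitzRetract.{z, v} lam (X i)) :
    IsAbsoluteLipschitzRetract.{z, max u v} (2 * lam) ↥(c0Sum X) := by
  classical
  intro Z instZ j hj
  have h0mem : (0 : lp X ⊤) ∈ c0Sum X := by
    simp only [c0Sum, Set.mem_setOf_eq]
    have hz : (fun i => ‖(0 : lp X ⊤) i‖) = fun _ => (0 : ℝ) := by
      funext i
      simp [lp.coeFn_zero]
    rw [hz]
    exact tendsto_const_nhds
  haveI hA : Nonempty ↥(c0Sum X) := ⟨⟨0, h0mem⟩⟩
  have hnorm_coord : ∀ (f : lp X ⊤) i, ‖(f : ∀ k, X k) i‖ ≤ ‖f‖ := fun f i =>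
    lp.norm_apply_le_norm (by norm_num) f i
  have hnorm_single : ∀ (f : lp X ⊤) i, (∀ k, k ≠ i → (f : ∀ k, X k) k = 0) →
      ‖f‖ = ‖(f : ∀ k, X k) i‖ := by
    intro f i hf
    refine le_antisymm ?_ (hnorm_coord f i)
    refine lp.norm_le_of_forall_le (norm_nonneg _) fun k => ?_
    by_cases hk : k = i
    · subst hk; exact le_rfl
    · rw [hf k hk, norm_zero]; exact norm_nonneg _
  have hmemsingle : ∀ (i) (v : X i), lp.single ⊤ i v ∈ c0Sum X := by
    intro i v
    simp only [c0Sum, Set.mem_setOf_eq]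
    have hev : ∀ᶠ k in Filter.cofinite, ‖(lp.single ⊤ i v : ∀ k, X k) k‖ = 0 := by
      refine Filter.eventually_cofinite.mpr (Set.Finite.subset (Set.finite_singleton i) ?_)
      intro k hk
      simp only [Set.mem_setOf_eq] at hk
      by_contra hki
      refine hk ?_
      rw [lp.single_apply_ne ⊤ i v (by simpa using hki), norm_zero]
    exact Filter.Tendsto.congr'
      (by filter_upwards [hev] with k hk using hk.symm) tendsto_const_nhds
  have eIso : ∀ i, Isometry
      (fun v : X i => (⟨lp.single ⊤ i v, hmemsingle i v⟩ : ↥(c0Sum X))) := by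
    intro i
    refine Isometry.of_dist_eq fun v w => ?_
    rw [Subtype.dist_eq]
    show dist (lp.single ⊤ i v) (lp.single ⊤ i w) = dist v w
    rw [dist_eq_norm, dist_eq_norm]
    have hcoord : ∀ k, k ≠ i →
        ((lp.single ⊤ i v - lp.single ⊤ i w : lp X ⊤) : ∀ k, X k) k = 0 := by
      intro k hk
      rw [lp.coeFn_sub, Pi.sub_apply, lp.single_apply_ne ⊤ i v hk,
        lp.single_apply_ne ⊤ i w hk, sub_zero]
    rw [hnorm_single _ i hcoord, lp.coeFn_sub, Pi.sub_apply,
      lp.single_apply_self, lp.single_apply_self]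
  have hpLip : ∀ (i) (y y' : ↥(c0Sum X)),
      dist (((y : lp X ⊤) : ∀ k, X k) i) (((y' : lp X ⊤) : ∀ k, X k) i) ≤ dist y y' := by
    intro i y y'
    rw [Subtype.dist_eq, dist_eq_norm, dist_eq_norm]
    have hc := hnorm_coord ((y : lp X ⊤) - (y' : lp X ⊤)) i
    rwa [lp.coeFn_sub, Pi.sub_apply] at hc
  have F_ex : ∀ i, ∃ F : Z → X i,
      (∀ z z', dist (F z) (F z') ≤ lam * dist z z') ∧
      ∀ y : ↥(c0Sum X), F (j y) = ((y : lp X ⊤) : ∀ k, X k) i := by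
    intro i
    exact glue_extension lam j hj
      (fun v : X i => j ⟨lp.single ⊤ i v, hmemsingle i v⟩) (hj.comp (eIso i))
      (fun y : ↥(c0Sum X) => ((y : lp X ⊤) : ∀ k, X k) i) (hpLip i) (h i)
  choose F hF1 hF2 using F_ex
  set y0 : ↥(c0Sum X) := ⟨0, h0mem⟩ with hy0
  have hF0 : ∀ i, F i (j y0) = 0 := by
    intro i
    rw [hF2 i y0]
    show ((0 : lp X ⊤) : ∀ k, X k) i = 0
    rw [lp.coeFn_zero]
    rfl
  have hGmem : ∀ z : Z, Memℓp (fun i => F i z) ⊤ := by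
    intro z
    apply memℓp_infty
    refine ⟨lam * dist z (j y0), ?_⟩
    rintro x ⟨i, rfl⟩
    have h1 := hF1 i z (j y0)
    rw [hF0 i, dist_zero_right] at h1
    exact h1
  set G : Z → lp X ⊤ := fun z => ⟨fun i => F i z, hGmem z⟩ with hG
  have hGcoord : ∀ z i, (G z : ∀ k, X k) i = F i z := fun z i => rfl
  have hGlip : ∀ z z', ‖G z - G z'‖ ≤ lam * dist z z' := by
    intro z z'
    refine lp.norm_le_of_forall_le (by positivity) fun i => ?_
    rw [lp.coeFn_sub, Pi.sub_apply, hGcoord, hGcoord]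
    have h1 := hF1 i z z'
    rwa [dist_eq_norm] at h1
  have hGj : ∀ y : ↥(c0Sum X), G (j y) = (y : lp X ⊤) := by
    intro y
    apply lp.ext
    funext i
    exact hF2 i y
  set θ : lp X ⊤ → ℝ := fun x => Metric.infDist x (c0Sum X) with hθ
  have hθ0 : ∀ x, 0 ≤ θ x := fun x => Metric.infDist_nonneg
  have hθlip : ∀ x y : lp X ⊤, |θ x - θ y| ≤ ‖x - y‖ := by
    intro x y
    have h1 := Metric.infDist_le_infDist_add_dist (x := x) (y := y) (s := c0Sum X)
    have h2 := Metric.infDist_le_infDist_add_dist (x := y) (y := x) (s := c0Sum X)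
    rw [dist_eq_norm] at h1
    rw [dist_eq_norm, norm_sub_rev] at h2
    exact abs_sub_le_iff.mpr ⟨by simp only [hθ]; linarith, by simp only [hθ]; linarith⟩
  have hmemρ : ∀ x : lp X ⊤, Memℓp (fun i => myTrunc (θ x) ((x : ∀ k, X k) i)) ⊤ := by
    intro x
    apply memℓp_infty
    refine ⟨‖x‖, ?_⟩
    rintro t ⟨i, rfl⟩
    exact (norm_myTrunc_le (hθ0 x) _).trans (hnorm_coord x i)
  set ρ : lp X ⊤ → lp X ⊤ := fun x => ⟨fun i => myTrunc (θ x) ((x : ∀ k, X k) i), hmemρ x⟩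
    with hρ
  have hρcoord : ∀ (x : lp X ⊤) i, (ρ x : ∀ k, X k) i = myTrunc (θ x) ((x : ∀ k, X k) i) :=
    fun x i => rfl
  have hρc0 : ∀ x : lp X ⊤, ρ x ∈ c0Sum X := by
    intro x
    simp only [c0Sum, Set.mem_setOf_eq]
    refine Metric.tendsto_nhds.mpr fun ε hε => ?_
    have hne : (c0Sum X).Nonempty := ⟨0, h0mem⟩
    have hlt : Metric.infDist x (c0Sum X) < θ x + ε / 2 := by
      simp only [hθ]
      linarith
    obtain ⟨w, hwmem, hwdist⟩ := (Metric.infDist_lt_iff hne).mp hlt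
    have hwtend : Filter.Tendsto (fun i => ‖(w : ∀ k, X k) i‖) Filter.cofinite (nhds 0) := hwmem
    have hwev : ∀ᶠ i in Filter.cofinite, ‖(w : ∀ k, X k) i‖ < ε / 2 := by
      have h2 := Metric.tendsto_nhds.mp hwtend (ε / 2) (by linarith)
      filter_upwards [h2] with i hi
      rwa [dist_zero_right, Real.norm_eq_abs, abs_of_nonneg (norm_nonneg _)] at hi
    filter_upwards [hwev] with i hi
    show dist ‖(ρ x : ∀ k, X k) i‖ 0 < ε
    rw [dist_zero_right, Real.norm_eq_abs, abs_of_nonneg (norm_nonneg _), hρcoord,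
      norm_myTrunc (hθ0 x)]
    have hxw : ‖(x : ∀ k, X k) i - (w : ∀ k, X k) i‖ ≤ dist x w := by
      rw [dist_eq_norm]
      have h3 := hnorm_coord (x - w) i
      rwa [lp.coeFn_sub, Pi.sub_apply] at h3
    have hxi : ‖(x : ∀ k, X k) i‖ ≤ ‖(x : ∀ k, X k) i - (w : ∀ k, X k) i‖
        + ‖(w : ∀ k, X k) i‖ := by
      have h4 := norm_add_le ((x : ∀ k, X k) i - (w : ∀ k, X k) i) ((w : ∀ k, X k) i)
      rwa [sub_add_cancel] at h4
    refine max_lt hε ?_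
    simp only [hθ] at hwdist ⊢
    linarith
  have hρfix : ∀ x : lp X ⊤, x ∈ c0Sum X → ρ x = x := by
    intro x hx
    apply lp.ext
    funext i
    rw [hρcoord, show θ x = 0 from Metric.infDist_zero_of_mem hx, myTrunc_zero]
  have hρlip : ∀ x y : lp X ⊤, ‖ρ x - ρ y‖ ≤ 2 * ‖x - y‖ := by
    intro x y
    refine lp.norm_le_of_forall_le (by positivity) fun i => ?_
    rw [lp.coeFn_sub, Pi.sub_apply, hρcoord, hρcoord]
    have h1 := norm_myTrunc_sub_myTrunc (s := θ y) (hθ0 x) ((x : ∀ k, X k) i)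
      ((y : ∀ k, X k) i)
    have h2 : ‖(x : ∀ k, X k) i - (y : ∀ k, X k) i‖ ≤ ‖x - y‖ := by
      have h3 := hnorm_coord (x - y) i
      rwa [lp.coeFn_sub, Pi.sub_apply] at h3
    have h3 := hθlip x y
    linarith
  refine ⟨fun z => ⟨ρ (G z), hρc0 (G z)⟩, ?_, ?_⟩
  · refine LipschitzWith.of_dist_le_mul fun z z' => ?_
    rw [Subtype.dist_eq]
    show dist (ρ (G z)) (ρ (G z')) ≤ _
    rw [dist_eq_norm]
    have h1 := hρlip (G z) (G z')
    have h2 := hGlip z z'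
    have h3 : ((2 * lam : NNReal) : ℝ) = 2 * (lam : ℝ) := by push_cast; ring
    rw [h3]
    have hd : (0 : ℝ) ≤ dist z z' := dist_nonneg
    nlinarith [norm_nonneg (G z - G z')]
  · intro y
    apply Subtype.ext
    show ρ (G (j y)) = (y : lp X ⊤)
    rw [hGj y]
    exact hρfix _ y.2
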